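/- Let n ≥ 1, θ > 0 and 0 ≤ γ ≤ θ, and set ρ ≡ 1 (so Ψ(B(x₀,r)) = (1+r)^θ). Then the weight w(x) = (1+|x|)^{−(n+γ)} belongs to A_1^ρ: there is a constant C such that for every ball B = B(x₀,r), (1/((1+r)^θ |B|)) ∫_B w(y) dy ≤ C w(x) for a.e. x ∈ B. -/

import Mathlib

open MeasureTheory Metric Set
open Module

lemma aux_rpow {a b e : ℝ} (ha : 0 < a) (hb : 0 < b) (hab : a ≤ 3 * b) (he : 0 ≤ e) :
    b ^ (-e) ≤ 3 ^ e * a ^ (-e) := by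
  have hae : (0:ℝ) < a ^ e := Real.rpow_pos_of_pos ha e
  have hbe : (0:ℝ) < b ^ e := Real.rpow_pos_of_pos hb e
  have h3e : (0:ℝ) < (3:ℝ) ^ e := Real.rpow_pos_of_pos (by norm_num) e
  have h1 : a ^ e ≤ 3 ^ e * b ^ e := by
    calc a ^ e ≤ (3 * b) ^ e := Real.rpow_le_rpow ha.le hab he
    _ = 3 ^ e * b ^ e := Real.mul_rpow (by norm_num) hb.le
  rw [Real.rpow_neg ha.le, Real.rpow_neg hb.le]
  rw [show (3:ℝ) ^ e * (a ^ e)⁻¹ = 3 ^ e / a ^ e from (div_eq_mul_inv _ _).symm,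
    inv_eq_one_div, div_le_div_iff₀ hbe hae]
  nlinarith

/-- With `ρ ≡ 1` (so `Ψ(B(x₀,r)) = (1+r)^θ`), the weight `w(x) = (1+|x|)^{−(n+γ)}`
with `0 ≤ γ ≤ θ` belongs to `A_1^ρ`. -/
theorem stmt_7 {n : ℕ} (hn : 1 ≤ n) (θ γ : ℝ) (hθ : 0 < θ) (hγ0 : 0 ≤ γ) (hγθ : γ ≤ θ) :
    ∃ C : ℝ, 0 < C ∧ ∀ (x₀ : EuclideanSpace ℝ (Fin n)) (r : ℝ), 0 < r →
      ∀ᵐ x ∂(volume.restrict (ball x₀ r)),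
        ((1 + r) ^ θ * (volume (ball x₀ r)).toReal)⁻¹ *
            ∫ y in ball x₀ r, (1 + ‖y‖) ^ (-((n : ℝ) + γ)) ≤
          C * (1 + ‖x‖) ^ (-((n : ℝ) + γ)) := by
  classical
  set E := EuclideanSpace ℝ (Fin n)
  haveI : NeZero n := ⟨by omega⟩
  haveI : Nontrivial E := by unfold E; infer_instance
  have hfr : finrank ℝ E = n := finrank_euclideanSpace_fin
  -- the comparison weight, integrable on all of space
  set g : E → ℝ := fun y => (1 + ‖y‖) ^ (-((n:ℝ) + θ)) with hgdef
  have hgint : Integrable g := by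
    apply integrable_one_add_norm
    rw [hfr]; linarith
  set I : ℝ := ∫ y, g y with hIdef
  have hI0 : 0 ≤ I := integral_nonneg fun y => Real.rpow_nonneg (by positivity) _
  set v : ℝ := (volume (ball (0 : E) 1)).toReal with hvdef
  have hv : 0 < v := by
    apply ENNReal.toReal_pos (measure_ball_pos volume _ one_pos).ne' measure_ball_lt_top.ne
  set w : E → ℝ := fun y => (1 + ‖y‖) ^ (-((n:ℝ) + γ)) with hwdef
  have hwcont : Continuous w := by
    apply Continuous.rpow_const (by continuity)
    intro y; left; positivity
  have hwpos : ∀ y : E, 0 < w y := fun y => Real.rpow_pos_of_pos (by positivity) _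
  refine ⟨3 ^ ((n:ℝ) + 2*θ) * (1 + 2^n * I / v), by positivity, ?_⟩
  set C : ℝ := 3 ^ ((n:ℝ) + 2*θ) * (1 + 2^n * I / v) with hCdef
  intro x₀ r hr
  apply (ae_restrict_iff' measurableSet_ball).mpr (ae_of_all _ fun x hx => ?_)
  -- measure of the ball
  set M : ℝ := (volume (ball x₀ r)).toReal with hMdef
  have hM : M = r ^ n * v := by
    rw [hMdef, Measure.addHaar_ball volume x₀ hr.le, hfr, ENNReal.toReal_mul,
      ENNReal.toReal_ofReal (by positivity)]
  have hMpos : 0 < M :=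
    ENNReal.toReal_pos (measure_ball_pos volume _ hr).ne' measure_ball_lt_top.ne
  have hP1 : (1:ℝ) ≤ (1 + r) ^ θ := Real.one_le_rpow (by linarith) hθ.le
  have hPpos : (0:ℝ) < (1 + r) ^ θ := by linarith
  have hwint : IntegrableOn w (ball x₀ r) := by
    exact (hwcont.continuousOn.integrableOn_compact (isCompact_closedBall x₀ r)).mono_set
      ball_subset_closedBall
  have hxball : ‖x - x₀‖ < r := by rwa [← dist_eq_norm, ← mem_ball]
  have hxn : ‖x‖ ≤ ‖x₀‖ + r := by
    have := norm_sub_norm_le x x₀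
    linarith
  have hC1 : 3 ^ ((n:ℝ) + γ) ≤ C := by
    rw [hCdef]
    have h1 : (3:ℝ) ^ ((n:ℝ) + γ) ≤ 3 ^ ((n:ℝ) + 2*θ) :=
      Real.rpow_le_rpow_of_exponent_le (by norm_num) (by linarith)
    have ht : (0:ℝ) ≤ 2^n * I / v := by positivity
    nlinarith [mul_nonneg (Real.rpow_pos_of_pos (show (0:ℝ) < 3 by norm_num) ((n:ℝ) + 2*θ)).le ht]
  -- common "Case A" argument: when every point of the ball is comparable to x
  have mainA : (∀ y ∈ ball x₀ r, 1 + ‖x‖ ≤ 3 * (1 + ‖y‖)) →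
      ((1 + r) ^ θ * M)⁻¹ * ∫ y in ball x₀ r, w y ≤ C * w x := by
    intro h3
    have hkey : ∀ y ∈ ball x₀ r, w y ≤ 3 ^ ((n:ℝ) + γ) * w x := by
      intro y hy
      exact aux_rpow (by positivity) (by positivity) (h3 y hy) (by positivity)
    have hint : ∫ y in ball x₀ r, w y ≤ (3 ^ ((n:ℝ) + γ) * w x) * M := by
      calc ∫ y in ball x₀ r, w y ≤ ∫ _y in ball x₀ r, 3 ^ ((n:ℝ) + γ) * w x :=
            setIntegral_mono_on hwint
              (integrableOn_const measure_ball_lt_top.ne) measurableSet_ball hkey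
        _ = M * (3 ^ ((n:ℝ) + γ) * w x) := by rw [setIntegral_const]; rfl
        _ = (3 ^ ((n:ℝ) + γ) * w x) * M := mul_comm _ _
    calc ((1 + r) ^ θ * M)⁻¹ * ∫ y in ball x₀ r, w y
        ≤ ((1 + r) ^ θ * M)⁻¹ * ((3 ^ ((n:ℝ) + γ) * w x) * M) :=
          mul_le_mul_of_nonneg_left hint (by positivity)
      _ = 3 ^ ((n:ℝ) + γ) * w x / (1 + r) ^ θ := by
          field_simp
      _ ≤ 3 ^ ((n:ℝ) + γ) * w x := by
          rw [div_le_iff₀ hPpos]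
          nlinarith [mul_nonneg (mul_nonneg (Real.rpow_pos_of_pos (show (0:ℝ) < 3 by norm_num)
            ((n:ℝ) + γ)).le (hwpos x).le) (sub_nonneg.mpr hP1)]
      _ ≤ C * w x := mul_le_mul_of_nonneg_right hC1 (hwpos x).le
  rcases le_or_gt r 1 with hr1 | hr1
  · apply mainA
    intro y hy
    have hyb : ‖x₀ - y‖ < r := by rwa [norm_sub_rev, ← dist_eq_norm, ← mem_ball]
    have hy1 : ‖x₀‖ ≤ ‖y‖ + r := by
      have := norm_sub_norm_le x₀ y
      linarith
    have := norm_nonneg y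
    linarith
  rcases le_or_gt ‖x₀‖ (2*r) with hx0 | hx0
  · -- Case B : large ball near the origin
    have hs0 : (0:ℝ) < 1 + r := by linarith
    have hxb : 1 + ‖x‖ ≤ 3 * (1 + r) := by linarith
    -- lower bound for w x
    have h1 : (1 + r) ^ (-((n:ℝ) + γ)) ≤ 3 ^ ((n:ℝ) + γ) * w x :=
      aux_rpow (by positivity) hs0 hxb (by positivity)
    -- pointwise bound by the integrable majorant
    have hkeyB : ∀ y ∈ ball x₀ r, w y ≤ 3 ^ θ * (1 + r) ^ (θ - γ) * g y := by
      intro y hy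
      have hyb : ‖y - x₀‖ < r := by rwa [← dist_eq_norm, ← mem_ball]
      have hyn : ‖y‖ ≤ 3 * r := by
        have := norm_sub_norm_le y x₀
        linarith
      have hy3 : 1 + ‖y‖ ≤ 3 * (1 + r) := by linarith
      have hsplit : w y = (1 + ‖y‖) ^ (θ - γ) * g y := by
        rw [hwdef, hgdef]
        dsimp only
        rw [← Real.rpow_add (by positivity)]
        ring_nf
      have hbd : (1 + ‖y‖) ^ (θ - γ) ≤ 3 ^ θ * (1 + r) ^ (θ - γ) := by
        calc (1 + ‖y‖) ^ (θ - γ) ≤ (3 * (1 + r)) ^ (θ - γ) :=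
              Real.rpow_le_rpow (by positivity) hy3 (by linarith)
          _ = 3 ^ (θ - γ) * (1 + r) ^ (θ - γ) := Real.mul_rpow (by norm_num) (by positivity)
          _ ≤ 3 ^ θ * (1 + r) ^ (θ - γ) := by
              apply mul_le_mul_of_nonneg_right
                (Real.rpow_le_rpow_of_exponent_le (by norm_num) (by linarith))
                (Real.rpow_nonneg (by positivity) _)
      rw [hsplit]
      exact mul_le_mul_of_nonneg_right hbd (Real.rpow_nonneg (by positivity) _)
    have hgB : ∫ y in ball x₀ r, g y ≤ I :=
      setIntegral_le_integral hgint (ae_of_all _ fun y => Real.rpow_nonneg (by positivity) _)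
    have hintB : ∫ y in ball x₀ r, w y ≤ 3 ^ θ * (1 + r) ^ (θ - γ) * I := by
      calc ∫ y in ball x₀ r, w y ≤ ∫ y in ball x₀ r, 3 ^ θ * (1 + r) ^ (θ - γ) * g y :=
            setIntegral_mono_on hwint (hgint.integrableOn.const_mul _) measurableSet_ball hkeyB
        _ = 3 ^ θ * (1 + r) ^ (θ - γ) * ∫ y in ball x₀ r, g y := integral_const_mul _ _
        _ ≤ 3 ^ θ * (1 + r) ^ (θ - γ) * I := mul_le_mul_of_nonneg_left hgB (by positivity)
    -- abbreviations
    have hq : (0:ℝ) < (1 + r) ^ (-((n:ℝ) + γ)) := Real.rpow_pos_of_pos hs0 _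
    have hu : (0:ℝ) < (3:ℝ) ^ (-((n:ℝ) + γ)) := Real.rpow_pos_of_pos (by norm_num) _
    have h3e : (0:ℝ) < (3:ℝ) ^ ((n:ℝ) + γ) := Real.rpow_pos_of_pos (by norm_num) _
    have hKEY : ((1 + r) ^ θ * M)⁻¹ * (3 ^ θ * (1 + r) ^ (θ - γ) * I) ≤
        C * ((3:ℝ) ^ (-((n:ℝ) + γ)) * (1 + r) ^ (-((n:ℝ) + γ))) := by
      have e3 : (3:ℝ) ^ ((n:ℝ) + 2*θ) * 3 ^ (-((n:ℝ) + γ)) = 3 ^ (2*θ - γ) := by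
        rw [← Real.rpow_add (by norm_num)]
        ring_nf
      have e4 : (3:ℝ) ^ θ ≤ 3 ^ (2*θ - γ) :=
        Real.rpow_le_rpow_of_exponent_le (by norm_num) (by linarith)
      have e5 : (1 + r) ^ (θ - γ) =
          (1 + r) ^ θ * ((1 + r) ^ (-((n:ℝ) + γ)) * (1 + r) ^ ((n:ℝ)) ) := by
        rw [← Real.rpow_add hs0, ← Real.rpow_add hs0]
        ring_nf
      have e6 : (1 + r) ^ ((n:ℝ)) = (1 + r) ^ (n:ℕ) := Real.rpow_natCast _ n
      have e7 : ((1:ℝ) + r) ^ (n:ℕ) ≤ 2 ^ n * r ^ n := by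
        calc ((1:ℝ) + r) ^ n ≤ (2*r) ^ n := pow_le_pow_left₀ (by linarith) (by linarith) n
          _ = 2 ^ n * r ^ n := mul_pow 2 r n
      have hrn : (0:ℝ) < r ^ n := by positivity
      have hD : (0:ℝ) < (3:ℝ) ^ (2*θ - γ) := Real.rpow_pos_of_pos (by norm_num) _
      rw [e5, e6, hM, hCdef, inv_mul_le_iff₀ (by positivity)]
      have hvne : v ≠ 0 := hv.ne'
      have hRHS : (1 + r) ^ θ * (r ^ n * v) * (3 ^ ((n:ℝ) + 2*θ) * (1 + 2 ^ n * I / v) *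
          (3 ^ (-((n:ℝ) + γ)) * (1 + r) ^ (-((n:ℝ) + γ)))) =
          3 ^ (2*θ - γ) * ((1 + r) ^ θ * (1 + r) ^ (-((n:ℝ) + γ))) * r ^ n * (v + 2 ^ n * I) := by
        rw [← e3]
        field_simp
      rw [hRHS]
      calc 3 ^ θ * ((1 + r) ^ θ * ((1 + r) ^ (-((n:ℝ) + γ)) * (1 + r) ^ (n:ℕ))) * I
          ≤ 3 ^ θ * ((1 + r) ^ θ * ((1 + r) ^ (-((n:ℝ) + γ)) * (2 ^ n * r ^ n))) * I := by
            apply mul_le_mul_of_nonneg_right _ hI0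
            apply mul_le_mul_of_nonneg_left _ (Real.rpow_nonneg (by norm_num) θ)
            apply mul_le_mul_of_nonneg_left _ hPpos.le
            exact mul_le_mul_of_nonneg_left e7 hq.le
        _ ≤ 3 ^ (2*θ - γ) * ((1 + r) ^ θ * ((1 + r) ^ (-((n:ℝ) + γ)) * (2 ^ n * r ^ n))) * I := by
            apply mul_le_mul_of_nonneg_right (mul_le_mul_of_nonneg_right e4 (by positivity)) hI0
        _ = 3 ^ (2*θ - γ) * ((1 + r) ^ θ * (1 + r) ^ (-((n:ℝ) + γ))) * r ^ n * (2 ^ n * I) := by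
            ring
        _ ≤ 3 ^ (2*θ - γ) * ((1 + r) ^ θ * (1 + r) ^ (-((n:ℝ) + γ))) * r ^ n * (v + 2 ^ n * I) := by
            apply mul_le_mul_of_nonneg_left _ (by positivity)
            linarith
    -- conclude
    have hC0 : (0:ℝ) ≤ C := le_trans h3e.le hC1
    have hwx : C * ((3:ℝ) ^ (-((n:ℝ) + γ)) * (1 + r) ^ (-((n:ℝ) + γ))) ≤ C * w x := by
      apply mul_le_mul_of_nonneg_left _ hC0
      have h31 : (3:ℝ) ^ (-((n:ℝ) + γ)) * 3 ^ ((n:ℝ) + γ) = 1 := by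
        rw [← Real.rpow_add (by norm_num : (0:ℝ) < 3),
          show (-((n:ℝ)+γ)) + ((n:ℝ)+γ) = 0 by ring, Real.rpow_zero]
      calc (3:ℝ) ^ (-((n:ℝ) + γ)) * (1 + r) ^ (-((n:ℝ) + γ))
          ≤ 3 ^ (-((n:ℝ) + γ)) * (3 ^ ((n:ℝ) + γ) * w x) := mul_le_mul_of_nonneg_left h1 hu.le
        _ = w x := by rw [← mul_assoc, h31, one_mul]
    calc ((1 + r) ^ θ * M)⁻¹ * ∫ y in ball x₀ r, w y
        ≤ ((1 + r) ^ θ * M)⁻¹ * (3 ^ θ * (1 + r) ^ (θ - γ) * I) :=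
          mul_le_mul_of_nonneg_left hintB (inv_nonneg.mpr (mul_nonneg hPpos.le hMpos.le))
      _ ≤ C * ((3:ℝ) ^ (-((n:ℝ) + γ)) * (1 + r) ^ (-((n:ℝ) + γ))) := hKEY
      _ ≤ C * w x := hwx
  · -- Case A' : ball far from origin
    apply mainA
    intro y hy
    have hyb : ‖x₀ - y‖ < r := by rwa [norm_sub_rev, ← dist_eq_norm, ← mem_ball]
    have hy1 : ‖x₀‖ ≤ ‖y‖ + r := by
      have := norm_sub_norm_le x₀ y
      linarith
    linarith
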